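/- Let p ≥ 1 and α ≥ 1. There exists a positive constant c = c(p, α) such that for all real numbers a, b ≥ 0: (a+b)^{α−1} |a−b|^p ≤ c · |a^{(p+α−1)/p} − b^{(p+α−1)/p}|^p. -/

import Mathlib

open Real

/-- **Algebraic inequality.** For `p ≥ 1` and `α ≥ 1` there is `c = c(p,α) > 0` such that for
all `a, b ≥ 0`:
`(a+b)^{α-1} |a-b|^p ≤ c |a^{(p+α-1)/p} - b^{(p+α-1)/p}|^p`. -/
theorem algebraic_inequality_sum_power (p α : ℝ) (hp : 1 ≤ p) (hα : 1 ≤ α) :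
    ∃ c : ℝ, 0 < c ∧ ∀ a b : ℝ, 0 ≤ a → 0 ≤ b →
      (a + b) ^ (α - 1) * |a - b| ^ p ≤
        c * |a ^ ((p + α - 1) / p) - b ^ ((p + α - 1) / p)| ^ p := by
  have hp0 : (0 : ℝ) < p := lt_of_lt_of_le one_pos hp
  refine ⟨2 ^ (α - 1), Real.rpow_pos_of_pos two_pos _, ?_⟩
  have key : ∀ a b : ℝ, 0 ≤ a → 0 ≤ b → b ≤ a →
      (a + b) ^ (α - 1) * |a - b| ^ p ≤
        2 ^ (α - 1) * |a ^ ((p + α - 1) / p) - b ^ ((p + α - 1) / p)| ^ p := by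
    intro a b ha hb hba
    set γ := (α - 1) / p with hγ
    have hγ0 : 0 ≤ γ := div_nonneg (by linarith) hp0.le
    have hβ : (p + α - 1) / p = γ + 1 := by rw [hγ, div_add_one hp0.ne']; ring
    rw [hβ]
    have h1 : a ^ γ * (a - b) ≤ a ^ (γ + 1) - b ^ (γ + 1) := by
      have ha1 : a ^ (γ + 1) = a ^ γ * a := by
        rw [Real.rpow_add' ha (by positivity), Real.rpow_one]
      have hb1 : b ^ (γ + 1) = b ^ γ * b := by
        rw [Real.rpow_add' hb (by positivity), Real.rpow_one]
      have hgb : b ^ γ ≤ a ^ γ := Real.rpow_le_rpow hb hba hγ0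
      have : b ^ γ * b ≤ a ^ γ * b := mul_le_mul_of_nonneg_right hgb hb
      nlinarith
    have hmono : b ^ (γ + 1) ≤ a ^ (γ + 1) :=
      Real.rpow_le_rpow hb hba (by linarith)
    rw [abs_of_nonneg (sub_nonneg.mpr hba), abs_of_nonneg (sub_nonneg.mpr hmono)]
    calc (a + b) ^ (α - 1) * (a - b) ^ p
        ≤ (2 * a) ^ (α - 1) * (a - b) ^ p := by
          apply mul_le_mul_of_nonneg_right
          · exact Real.rpow_le_rpow (by linarith) (by linarith) (by linarith)
          · exact Real.rpow_nonneg (by linarith) p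
      _ = 2 ^ (α - 1) * (a ^ γ * (a - b)) ^ p := by
          rw [Real.mul_rpow two_pos.le ha, Real.mul_rpow (Real.rpow_nonneg ha γ)
            (by linarith), ← Real.rpow_mul ha]
          have : γ * p = α - 1 := by rw [hγ, div_mul_cancel₀ _ hp0.ne']
          rw [this, mul_assoc]
      _ ≤ 2 ^ (α - 1) * (a ^ (γ + 1) - b ^ (γ + 1)) ^ p := by
          apply mul_le_mul_of_nonneg_left _ (Real.rpow_nonneg two_pos.le _)
          exact Real.rpow_le_rpow (mul_nonneg (Real.rpow_nonneg ha γ) (by linarith))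
            h1 hp0.le
  intro a b ha hb
  rcases le_total b a with h | h
  · exact key a b ha hb h
  · have := key b a hb ha h
    rwa [abs_sub_comm, add_comm, abs_sub_comm (b ^ _)] at this
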